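/- Generalized integration formula: let a > 0, b > 0, w > 0 and λ be real numbers and x > 0 a real number. Then (1/Γ(w)) · ∫_0^x (x − u)^{w−1} · u^{b−1} · E_{a,b}(λ · u^a) du = x^{b−1+w} · E_{a,b+w}(λ · x^a). -/

import Mathlib

open intervalIntegral

/-- The (real) Mittag-Leffler function `E_{a,b}(x) = ∑_{k=0}^∞ x^k / Γ(b + a k)` for real
parameters and real argument. -/
noncomputable def mittagLefflerReal (a b x : ℝ) : ℝ :=
  ∑' k : ℕ, x ^ k / Real.Gamma (b + a * k)

open MeasureTheory

lemma complex_real_beta_eq {p q : ℝ} : ∀ t ∈ Set.Icc (0:ℝ) 1,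
    ((t : ℝ) ^ (p - 1) * (1 - t) ^ (q - 1) : ℝ)
      = ‖((t : ℂ) ^ ((p:ℂ) - 1) * (1 - (t : ℂ)) ^ ((q:ℂ) - 1))‖ := by
  intro t ht
  have h1 : ((t:ℂ)) ^ ((p:ℂ) - 1) = ((t ^ (p-1) : ℝ) : ℂ) := by
    rw [Complex.ofReal_cpow ht.1]; push_cast; ring_nf
  have h2 : (1 - (t:ℂ)) ^ ((q:ℂ) - 1) = (((1 - t) ^ (q-1) : ℝ) : ℂ) := by
    rw [Complex.ofReal_cpow (by linarith [ht.2] : (0:ℝ) ≤ 1 - t)]; push_cast; ring_nf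
  rw [h1, h2, ← Complex.ofReal_mul, Complex.norm_real, Real.norm_eq_abs, abs_of_nonneg]
  exact mul_nonneg (Real.rpow_nonneg ht.1 _) (Real.rpow_nonneg (by linarith [ht.2]) _)

lemma real_betaIntegrable {p q : ℝ} (hp : 0 < p) (hq : 0 < q) :
    IntervalIntegrable (fun u : ℝ => u ^ (p - 1) * (1 - u) ^ (q - 1)) volume 0 1 := by
  have h := (Complex.betaIntegral_convergent (u := (p:ℂ)) (v := (q:ℂ)) (by simpa) (by simpa)).norm
  apply h.congr_ae
  rw [Set.uIoc_of_le (by norm_num : (0:ℝ) ≤ 1)]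
  filter_upwards [ae_restrict_mem measurableSet_Ioc] with t ht
  exact (complex_real_beta_eq t ⟨ht.1.le, ht.2⟩).symm

lemma real_beta {p q : ℝ} (hp : 0 < p) (hq : 0 < q) :
    ∫ u in (0:ℝ)..1, u ^ (p - 1) * (1 - u) ^ (q - 1)
      = Real.Gamma p * Real.Gamma q / Real.Gamma (p + q) := by
  have key := Complex.Gamma_mul_Gamma_eq_betaIntegral (s := (p:ℂ)) (t := (q:ℂ))
    (by simpa) (by simpa)
  have hbeta : Complex.betaIntegral (p:ℂ) (q:ℂ)
      = ((∫ u in (0:ℝ)..1, u ^ (p - 1) * (1 - u) ^ (q - 1) : ℝ) : ℂ) := by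
    rw [Complex.betaIntegral, ← intervalIntegral.integral_ofReal]
    apply intervalIntegral.integral_congr
    intro t ht
    rw [Set.uIcc_of_le (by norm_num : (0:ℝ) ≤ 1)] at ht
    show (t:ℂ) ^ ((p:ℂ) - 1) * (1 - (t:ℂ)) ^ ((q:ℂ) - 1)
        = ((t ^ (p - 1) * (1 - t) ^ (q - 1) : ℝ) : ℂ)
    have h1 : ((t:ℂ)) ^ ((p:ℂ) - 1) = ((t ^ (p-1) : ℝ) : ℂ) := by
      rw [Complex.ofReal_cpow ht.1]; push_cast; ring_nf
    have h2 : (1 - (t:ℂ)) ^ ((q:ℂ) - 1) = (((1 - t) ^ (q-1) : ℝ) : ℂ) := by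
      rw [Complex.ofReal_cpow (by linarith [ht.2] : (0:ℝ) ≤ 1 - t)]; push_cast; ring_nf
    rw [h1, h2, ← Complex.ofReal_mul]
  rw [hbeta] at key
  have hG : Real.Gamma (p + q) ≠ 0 := (Real.Gamma_pos_of_pos (by linarith)).ne'
  rw [← Complex.ofReal_add, Complex.Gamma_ofReal, Complex.Gamma_ofReal, Complex.Gamma_ofReal,
    ← Complex.ofReal_mul, ← Complex.ofReal_mul] at key
  have h2 := Complex.ofReal_inj.mp key
  field_simp
  linarith [h2]

lemma scaled_betaIntegrable {c w x : ℝ} (hc : 0 < c) (hw : 0 < w) (hx : 0 < x) :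
    IntervalIntegrable (fun u : ℝ => (x - u) ^ (w - 1) * u ^ (c - 1)) volume 0 x := by
  have h0 := ((real_betaIntegrable hc hw).comp_mul_left (c := x⁻¹)).const_mul
    (x ^ (c - 1) * x ^ (w - 1))
  rw [show (0:ℝ) / x⁻¹ = 0 by simp, show (1:ℝ) / x⁻¹ = x by field_simp] at h0
  apply h0.congr_ae
  rw [Set.uIoc_of_le hx.le]
  filter_upwards [ae_restrict_mem measurableSet_Ioc] with u hu
  have h1 : (x⁻¹ * u) ^ (c - 1) = x ^ (1 - c) * u ^ (c - 1) := by
    rw [Real.mul_rpow (by positivity) hu.1.le, ← Real.rpow_neg_one x, ← Real.rpow_mul hx.le]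
    ring_nf
  have h2 : (1 - x⁻¹ * u) ^ (w - 1) = x ^ (1 - w) * (x - u) ^ (w - 1) := by
    have : 1 - x⁻¹ * u = x⁻¹ * (x - u) := by field_simp
    rw [this, Real.mul_rpow (by positivity) (by linarith [hu.2] : (0:ℝ) ≤ x - u),
      ← Real.rpow_neg_one x, ← Real.rpow_mul hx.le]
    ring_nf
  have e1 : x ^ (c - 1) * x ^ (1 - c) = 1 := by
    rw [← Real.rpow_add hx]; norm_num
  have e2 : x ^ (w - 1) * x ^ (1 - w) = 1 := by
    rw [← Real.rpow_add hx]; norm_num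
  show x ^ (c - 1) * x ^ (w - 1) * ((x⁻¹ * u) ^ (c - 1) * (1 - x⁻¹ * u) ^ (w - 1))
      = (x - u) ^ (w - 1) * u ^ (c - 1)
  rw [h1, h2, show x ^ (c - 1) * x ^ (w - 1) * (x ^ (1 - c) * u ^ (c - 1) *
        (x ^ (1 - w) * (x - u) ^ (w - 1)))
      = (x ^ (c - 1) * x ^ (1 - c)) * ((x ^ (w - 1) * x ^ (1 - w)) *
        (u ^ (c - 1) * (x - u) ^ (w - 1))) by ring, e1, e2]
  ring

lemma scaled_beta {c w x : ℝ} (hc : 0 < c) (hw : 0 < w) (hx : 0 < x) :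
    ∫ u in (0:ℝ)..x, (x - u) ^ (w - 1) * u ^ (c - 1)
      = x ^ (w + c - 1) * (Real.Gamma w * Real.Gamma c / Real.Gamma (w + c)) := by
  have key := intervalIntegral.smul_integral_comp_mul_left
    (fun u : ℝ => (x - u) ^ (w - 1) * u ^ (c - 1)) (a := 0) (b := 1) x
  rw [mul_zero, mul_one] at key
  rw [← key]
  have : ∀ t ∈ Set.uIcc (0:ℝ) 1,
      (x - x * t) ^ (w - 1) * (x * t) ^ (c - 1)
        = (x ^ (w - 1) * x ^ (c - 1)) * (t ^ (c - 1) * (1 - t) ^ (w - 1)) := by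
    intro t ht
    rw [Set.uIcc_of_le (by norm_num : (0:ℝ) ≤ 1)] at ht
    rw [show x - x * t = x * (1 - t) by ring, Real.mul_rpow hx.le (by linarith [ht.2]),
      Real.mul_rpow hx.le ht.1]
    ring
  rw [intervalIntegral.integral_congr this, intervalIntegral.integral_const_mul,
    real_beta hc hw, smul_eq_mul,
    show w + c - 1 = 1 + (w - 1 + (c - 1)) by ring, Real.rpow_add hx, Real.rpow_add hx,
    Real.rpow_one, show c + w = w + c from add_comm c w]
  ring

lemma Gamma_lower {y M : ℝ} (hy : 1 ≤ y) (hM : 1 ≤ M) :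
    Real.exp (-(M + 1)) * M ^ (y - 1) ≤ Real.Gamma y := by
  rw [Real.Gamma_eq_integral (by linarith : 0 < y)]
  have hint : IntegrableOn (fun x : ℝ => Real.exp (-x) * x ^ (y - 1)) (Set.Ioi 0) volume :=
    Real.GammaIntegral_convergent (by linarith)
  have step1 : ∫ x in Set.Ioc M (M + 1), Real.exp (-x) * x ^ (y - 1)
      ≤ ∫ x in Set.Ioi (0:ℝ), Real.exp (-x) * x ^ (y - 1) := by
    apply setIntegral_mono_set hint
    · filter_upwards [ae_restrict_mem measurableSet_Ioi] with t ht
      have ht' : (0:ℝ) < t := ht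
      show (0:ℝ) ≤ Real.exp (-t) * t ^ (y - 1)
      positivity
    · apply HasSubset.Subset.eventuallyLE
      intro t ht
      exact lt_of_lt_of_le (by linarith) ht.1.le
  refine le_trans ?_ step1
  have step2 : ∫ x in Set.Ioc M (M + 1), Real.exp (-(M + 1)) * M ^ (y - 1)
      ≤ ∫ x in Set.Ioc M (M + 1), Real.exp (-x) * x ^ (y - 1) := by
    apply setIntegral_mono_on
    · exact integrableOn_const (by simp)
    · exact hint.mono_set (fun t ht => lt_of_lt_of_le (by linarith) ht.1.le)
    · exact measurableSet_Ioc
    · intro t ht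
      have h1 : Real.exp (-(M + 1)) ≤ Real.exp (-t) := by
        apply Real.exp_le_exp.mpr; linarith [ht.2]
      have h2 : M ^ (y - 1) ≤ t ^ (y - 1) :=
        Real.rpow_le_rpow (by linarith) ht.1.le (by linarith)
      exact mul_le_mul h1 h2 (by positivity) (Real.exp_pos _).le
  refine le_trans ?_ step2
  rw [setIntegral_const, Real.volume_real_Ioc, show M + 1 - M = 1 by ring]
  simp

lemma ml_summable {a b : ℝ} (ha : 0 < a) (hb : 0 < b) (z : ℝ) :
    Summable (fun k : ℕ => z ^ k / Real.Gamma (b + a * k)) := by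
  set M : ℝ := max 1 ((2 * |z|) ^ (1 / a)) with hMdef
  have hM : 1 ≤ M := le_max_left _ _
  have hMpos : 0 < M := by linarith
  have hMa : 2 * |z| ≤ M ^ a := by
    calc 2 * |z| = ((2 * |z|) ^ (1 / a)) ^ a := by
          rw [← Real.rpow_mul (by positivity), one_div, inv_mul_cancel₀ ha.ne', Real.rpow_one]
      _ ≤ M ^ a := Real.rpow_le_rpow (Real.rpow_nonneg (by positivity) _) (le_max_right _ _) ha.le
  apply Summable.of_norm_bounded_eventually_nat
    (g := fun k => (Real.exp (M + 1) * M ^ (1 - b)) * (1 / 2) ^ k)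
    ((summable_geometric_of_lt_one (by norm_num) (by norm_num)).mul_left _)
  filter_upwards [Filter.eventually_ge_atTop (⌈(1 - b) / a⌉₊)] with k hk
  have hbk : 1 ≤ b + a * k := by
    have h3 : (1 - b) / a ≤ (k : ℕ) := le_trans (Nat.le_ceil _) (by exact_mod_cast hk)
    have := (div_le_iff₀ ha).mp h3
    linarith
  have hΓ := Gamma_lower hbk hM
  have hΓpos : 0 < Real.Gamma (b + a * k) := Real.Gamma_pos_of_pos (by linarith)
  rw [norm_div, norm_pow, Real.norm_eq_abs, Real.norm_eq_abs,
    abs_of_pos hΓpos]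
  have hMk : M ^ (b + a * k - 1) = M ^ (b - 1) * (M ^ a) ^ k := by
    rw [← Real.rpow_natCast (M ^ a) k, ← Real.rpow_mul hMpos.le,
      ← Real.rpow_add hMpos]
    ring_nf
  have key : Real.exp (-(M + 1)) * (M ^ (b - 1) * (M ^ a) ^ k) ≤ Real.Gamma (b + a * k) := by
    rw [← hMk]; exact hΓ
  have hden : Real.exp (-(M + 1)) * (M ^ (b - 1) * (M ^ a) ^ k) > 0 := by positivity
  calc |z| ^ k / Real.Gamma (b + a * k)
      ≤ |z| ^ k / (Real.exp (-(M + 1)) * (M ^ (b - 1) * (M ^ a) ^ k)) := by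
        exact div_le_div_of_nonneg_left (by positivity) hden key
    _ = (Real.exp (M + 1) * M ^ (1 - b)) * (|z| / M ^ a) ^ k := by
        rw [Real.exp_neg, div_pow]
        rw [show (1:ℝ) - b = -(b-1) by ring, Real.rpow_neg hMpos.le]
        field_simp
    _ ≤ (Real.exp (M + 1) * M ^ (1 - b)) * (1 / 2) ^ k := by
        apply mul_le_mul_of_nonneg_left ?_ (by positivity)
        apply pow_le_pow_left₀ (by positivity) ?_ k
        rw [div_le_div_iff₀ (by positivity) (by norm_num)]
        linarith

/-- Generalized integration formula: for real `a, b, w > 0`, real `λ` and `x > 0`,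
`(1/Γ(w)) ∫_0^x (x−u)^{w−1} u^{b−1} E_{a,b}(λ u^a) du = x^{b−1+w} E_{a,b+w}(λ x^a)`. -/
theorem mittagLeffler_integration (a b w lam x : ℝ) (ha : 0 < a) (hb : 0 < b) (hw : 0 < w)
    (hx : 0 < x) :
    (1 / Real.Gamma w) *
        ∫ u in (0:ℝ)..x, (x - u) ^ (w - 1) * u ^ (b - 1) * mittagLefflerReal a b (lam * u ^ a)
      = x ^ (b - 1 + w) * mittagLefflerReal a (b + w) (lam * x ^ a) := by
  set c : ℕ → ℝ := fun k => b + a * k with hcdef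
  have hc : ∀ k : ℕ, 0 < c k := fun k => by
    have : (0:ℝ) ≤ a * k := by positivity
    simp only [hcdef]; linarith
  have hΓc : ∀ k : ℕ, 0 < Real.Gamma (c k) := fun k => Real.Gamma_pos_of_pos (hc k)
  have hΓw : 0 < Real.Gamma w := Real.Gamma_pos_of_pos hw
  set F : ℕ → ℝ → ℝ := fun k u => lam ^ k / Real.Gamma (c k) *
    ((x - u) ^ (w - 1) * u ^ (c k - 1)) with hFdef
  set μ : Measure ℝ := volume.restrict (Set.Ioc 0 x) with hμdef
  have hInt : ∀ k : ℕ, Integrable (F k) μ := by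
    intro k
    exact ((scaled_betaIntegrable (hc k) hw hx).1).const_mul _
  have hval : ∀ k : ℕ, ∫ u, F k u ∂μ
      = lam ^ k / Real.Gamma (c k) *
        (x ^ (w + c k - 1) * (Real.Gamma w * Real.Gamma (c k) / Real.Gamma (w + c k))) := by
    intro k
    rw [hμdef, MeasureTheory.integral_const_mul, ← intervalIntegral.integral_of_le hx.le,
      scaled_beta (hc k) hw hx]
  have hnormval : ∀ k : ℕ, ∫ u, ‖F k u‖ ∂μ
      = |lam| ^ k / Real.Gamma (c k) *
        (x ^ (w + c k - 1) * (Real.Gamma w * Real.Gamma (c k) / Real.Gamma (w + c k))) := by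
    intro k
    have hcongr : ∀ u ∈ Set.Ioc (0:ℝ) x, ‖F k u‖
        = |lam| ^ k / Real.Gamma (c k) * ((x - u) ^ (w - 1) * u ^ (c k - 1)) := by
      intro u hu
      have h1 : (0:ℝ) ≤ (x - u) ^ (w - 1) * u ^ (c k - 1) :=
        mul_nonneg (Real.rpow_nonneg (by linarith [hu.2]) _) (Real.rpow_nonneg hu.1.le _)
      rw [hFdef]
      simp only [Real.norm_eq_abs, abs_mul, abs_div, abs_pow,
        abs_of_pos (hΓc k), abs_of_nonneg h1]
    rw [hμdef, setIntegral_congr_fun measurableSet_Ioc hcongr, MeasureTheory.integral_const_mul,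
      ← intervalIntegral.integral_of_le hx.le, scaled_beta (hc k) hw hx]
  have hsummand : ∀ (t : ℝ) (k : ℕ), t ^ k / Real.Gamma (c k) *
        (x ^ (w + c k - 1) * (Real.Gamma w * Real.Gamma (c k) / Real.Gamma (w + c k)))
      = (Real.Gamma w * x ^ (b - 1 + w)) *
        ((t * x ^ a) ^ k / Real.Gamma ((b + w) + a * k)) := by
    intro t k
    have hxk : x ^ (w + c k - 1) = x ^ (b - 1 + w) * (x ^ a) ^ k := by
      rw [← Real.rpow_natCast (x ^ a) k, ← Real.rpow_mul hx.le, ← Real.rpow_add hx]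
      congr 1
      simp only [hcdef]; ring
    have hΓ : Real.Gamma (w + c k) = Real.Gamma ((b + w) + a * k) := by
      congr 1; simp only [hcdef]; ring
    rw [hxk, hΓ, mul_pow]
    have hΓne := (hΓc k).ne'
    field_simp
  have hsum : Summable (fun k => ∫ u, ‖F k u‖ ∂μ) := by
    have h := (ml_summable ha (by linarith : (0:ℝ) < b + w) (|lam| * x ^ a)).mul_left
      (Real.Gamma w * x ^ (b - 1 + w))
    exact h.congr fun k => ((hnormval k).trans (hsummand |lam| k)).symm
  have hswap := integral_tsum_of_summable_integral_norm hInt hsum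
  have hintegrand : ∀ u ∈ Set.Ioc (0:ℝ) x,
      (x - u) ^ (w - 1) * u ^ (b - 1) * mittagLefflerReal a b (lam * u ^ a)
        = ∑' k : ℕ, F k u := by
    intro u hu
    rw [mittagLefflerReal, ← tsum_mul_left]
    apply tsum_congr
    intro k
    have h1 : (lam * u ^ a) ^ k = lam ^ k * u ^ (a * k) := by
      rw [mul_pow, ← Real.rpow_natCast (u ^ a) k, ← Real.rpow_mul hu.1.le]
    have h2 : u ^ (b - 1) * u ^ (a * k) = u ^ (c k - 1) := by
      rw [← Real.rpow_add hu.1]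
      congr 1; simp only [hcdef]; ring
    have hF : F k u = lam ^ k / Real.Gamma (c k) * ((x - u) ^ (w - 1) * u ^ (c k - 1)) := rfl
    rw [hF, h1, ← h2]
    simp only [hcdef]
    ring
  have hLHS : ∫ u in (0:ℝ)..x,
      (x - u) ^ (w - 1) * u ^ (b - 1) * mittagLefflerReal a b (lam * u ^ a)
      = ∑' k : ℕ, ∫ u, F k u ∂μ := by
    rw [intervalIntegral.integral_of_le hx.le, hswap, ← hμdef]
    exact setIntegral_congr_fun measurableSet_Ioc hintegrand
  rw [hLHS]
  have hfin : ∑' k : ℕ, ∫ u, F k u ∂μ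
      = Real.Gamma w * (x ^ (b - 1 + w) * mittagLefflerReal a (b + w) (lam * x ^ a)) := by
    calc ∑' k : ℕ, ∫ u, F k u ∂μ
        = ∑' k : ℕ, (Real.Gamma w * x ^ (b - 1 + w)) *
            ((lam * x ^ a) ^ k / Real.Gamma ((b + w) + a * k)) :=
          tsum_congr fun k => (hval k).trans (hsummand lam k)
      _ = (Real.Gamma w * x ^ (b - 1 + w)) *
            ∑' k : ℕ, (lam * x ^ a) ^ k / Real.Gamma ((b + w) + a * k) := tsum_mul_left
      _ = Real.Gamma w * (x ^ (b - 1 + w) * mittagLefflerReal a (b + w) (lam * x ^ a)) := by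
          rw [mittagLefflerReal]; ring
  rw [hfin]
  field_simp
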